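/- arXiv:1209.1454 — 6 statements merged into one kernel-verified Lean document; each statement's English description precedes it below -/
import Mathlib

section
/- Let f : A → X and g : B → X be normal epimorphisms of pointed sets, and let u, v : A → B be pointed maps with g∘u = f and g∘v = f. Let E = {a ∈ A : u(a) = v(a)} (a pointed subset, since ⋆ ∈ E) with inclusion w : E → A. Then the composite h = f∘w : E → X is again a normal epimorphism of pointed sets. -/
/-- `f` is a normal epimorphism of pointed sets. -/
def NormalEpi {A X : Type} (a₀ : A) (x₀ : X) (f : A → X) : Prop :=
  f a₀ = x₀ ∧ Function.Surjective f ∧ ∀ a a', f a = f a' → f a = x₀ ∨ a = a'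

/-- The equalizer of two parallel pointed maps between normal epimorphisms over `X`,
composed with `f`, is again a normal epimorphism. -/
theorem stmt_2 {A B X : Type} (a₀ : A) (b₀ : B) (x₀ : X) (f : A → X) (g : B → X)
    (hf : NormalEpi a₀ x₀ f) (hg : NormalEpi b₀ x₀ g)
    (u v : A → B) (hu0 : u a₀ = b₀) (hv0 : v a₀ = b₀)
    (hgu : ∀ a, g (u a) = f a) (hgv : ∀ a, g (v a) = f a) :
    NormalEpi (⟨a₀, by rw [hu0, hv0]⟩ : {a : A // u a = v a}) x₀
      (fun e => f e.1) := by
  obtain ⟨hf0, hfs, hfn⟩ := hf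
  obtain ⟨hg0, hgs, hgn⟩ := hg
  refine ⟨hf0, ?_, ?_⟩
  · intro x
    obtain ⟨a, ha⟩ := hfs x
    have : g (u a) = g (v a) := by rw [hgu, hgv]
    rcases hgn _ _ this with h | h
    · exact ⟨⟨a₀, by rw [hu0, hv0]⟩, by simp [hf0, ← ha, ← hgu a, h]⟩
    · exact ⟨⟨a, h⟩, ha⟩
  · intro e e' h
    rcases hfn _ _ h with h' | h'
    · exact Or.inl h'
    · exact Or.inr (Subtype.ext h')
end

section
/- Let (f_i : A_i → X)_{i ∈ I} be a family of normal epimorphisms of pointed sets, and let P = {(a_i)_{i ∈ I} ∈ ∏_i A_i : f_i(a_i) = f_j(a_j) for all i, j} be their wide pullback over X, with f : P → X the common composite. Then f is a normal epimorphism of pointed sets. -/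
/-- The wide pullback of a family of normal epimorphisms of pointed sets over `X`,
with the common composite to `X`, is again a normal epimorphism. -/
theorem stmt_3 {I : Type} {A : I → Type} {X : Type} (a₀ : ∀ i, A i) (x₀ : X)
    (f : ∀ i, A i → X) (hf : ∀ i, NormalEpi (a₀ i) x₀ (f i)) (j : I) :
    NormalEpi
      (⟨fun i => a₀ i, fun i i' => by rw [(hf i).1, (hf i').1]⟩ :
        {p : ∀ i, A i // ∀ i i', f i (p i) = f i' (p i')})
      x₀ (fun p => f j (p.1 j)) := by
  refine ⟨(hf j).1, ?_, ?_⟩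
  · intro x
    choose a ha using fun i => (hf i).2.1 x
    exact ⟨⟨a, fun i i' => by rw [ha, ha]⟩, ha j⟩
  · rintro ⟨p, hp⟩ ⟨q, hq⟩ h
    by_cases hx : f j (p j) = x₀
    · exact Or.inl hx
    · refine Or.inr (Subtype.ext (funext fun i => ?_))
      rcases (hf i).2.2 (p i) (q i) (by rw [hp i j, hq i j]; exact h) with h' | h'
      · exact absurd ((hp i j).symm.trans h') hx
      · exact h'
end

section
/- Let X = (f : X₁ → X₀) be an object of the arrow category of pointed sets. Define [X] = (h : X₁ → X₀ ∨ f⁻¹(⋆)) where X₀ ∨ f⁻¹(⋆) is the wedge sum, h(x) = x ∈ f⁻¹(⋆) if f(x) = ⋆ and h(x) = f(x) ∈ X₀ otherwise, and define χ : [X] → X to be the identity on the upper level and, on the lower level, the identity on X₀ and the map collapsing f⁻¹(⋆) to ⋆. Then χ is a normal epimorphism in the arrow category of pointed sets (i.e., both components χ₁ and χ₀ are normal epimorphisms of pointed sets), and its kernel is ({⋆} → f⁻¹(⋆)). -/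
/-- The relation generating the wedge sum of pointed sets. -/
def WRel {A B : Type} (a₀ : A) (b₀ : B) : A ⊕ B → A ⊕ B → Prop :=
  fun p q => (p = Sum.inl a₀ ∧ q = Sum.inr b₀) ∨ (p = Sum.inr b₀ ∧ q = Sum.inl a₀)

/-- The wedge sum of the pointed sets `(A, a₀)` and `(B, b₀)`. -/
def Wedge {A B : Type} (a₀ : A) (b₀ : B) : Type := Quot (WRel a₀ b₀)

/-- The kernel `f⁻¹(⋆)` of a pointed map. -/
def Ker {X₁ X₀ : Type} (x₀ : X₀) (f : X₁ → X₀) : Type := {x : X₁ // f x = x₀}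

/-- The lower level `X₀ ∨ f⁻¹(⋆)` of the object `[X]`. -/
def Lw {X₁ X₀ : Type} (x₁₀ : X₁) (x₀ : X₀) (f : X₁ → X₀) (hf : f x₁₀ = x₀) : Type :=
  Wedge x₀ (⟨x₁₀, hf⟩ : Ker x₀ f)

open Classical in
/-- The structure map `h : X₁ → X₀ ∨ f⁻¹(⋆)` of `[X]`:
`x ↦ x ∈ f⁻¹(⋆)` if `f x = ⋆` and `x ↦ f x ∈ X₀` otherwise. -/
noncomputable def hmap {X₁ X₀ : Type} (x₁₀ : X₁) (x₀ : X₀) (f : X₁ → X₀)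
    (hf : f x₁₀ = x₀) : X₁ → Lw x₁₀ x₀ f hf :=
  fun x =>
    if hx : f x = x₀ then Quot.mk _ (Sum.inr (⟨x, hx⟩ : Ker x₀ f))
    else Quot.mk _ (Sum.inl (f x))

/-- The lower component of `χ : [X] → X`: the identity on `X₀`,
collapsing `f⁻¹(⋆)` to `⋆`. -/
def chi0 {X₁ X₀ : Type} (x₁₀ : X₁) (x₀ : X₀) (f : X₁ → X₀) (hf : f x₁₀ = x₀) :
    Lw x₁₀ x₀ f hf → X₀ :=
  Quot.lift (Sum.elim id (fun _ => x₀))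
    (by rintro p q (⟨rfl, rfl⟩ | ⟨rfl, rfl⟩) <;> rfl)

/-- `χ : [X] → X` is a normal epimorphism in the arrow category of pointed sets
(the upper component `χ₁ = id` and the lower component `χ₀` are normal epis, and
the square commutes), and its kernel is `({⋆} → f⁻¹(⋆))` componentwise. -/
theorem stmt_6 {X₁ X₀ : Type} (x₁₀ : X₁) (x₀ : X₀) (f : X₁ → X₀) (hf : f x₁₀ = x₀) :
    NormalEpi x₁₀ x₁₀ (id : X₁ → X₁) ∧
    NormalEpi (Quot.mk _ (Sum.inl x₀) : Lw x₁₀ x₀ f hf) x₀ (chi0 x₁₀ x₀ f hf) ∧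
    (∀ x : X₁, chi0 x₁₀ x₀ f hf (hmap x₁₀ x₀ f hf x) = f x) ∧
    (∀ x : X₁, (id x : X₁) = x₁₀ ↔ x = x₁₀) ∧
    (∀ l : Lw x₁₀ x₀ f hf,
      chi0 x₁₀ x₀ f hf l = x₀ ↔ ∃ κ : Ker x₀ f, l = Quot.mk _ (Sum.inr κ)) := by
  refine ⟨⟨rfl, Function.surjective_id, fun a a' h => Or.inr h⟩, ⟨rfl, ?_, ?_⟩, ?_, ?_, ?_⟩
  · intro y; exact ⟨Quot.mk _ (Sum.inl y), rfl⟩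
  · intro a a'
    induction a using Quot.ind with | _ p =>
    induction a' using Quot.ind with | _ q =>
    rcases p with a | k <;> rcases q with a' | k'
    · exact fun h => Or.inr (congrArg (fun z => Quot.mk _ (Sum.inl z)) h)
    · exact fun h => Or.inl h
    · exact fun _ => Or.inl rfl
    · exact fun _ => Or.inl rfl
  · intro x
    by_cases hx : f x = x₀ <;> simp [hmap, hx, chi0]
  · intro x; exact Iff.rfl
  · intro l
    induction l using Quot.ind with | _ p =>
    rcases p with a | k
    · constructor
      · intro h
        refine ⟨⟨x₁₀, hf⟩, ?_⟩
        have : a = x₀ := h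
        subst this
        exact Quot.sound (Or.inl ⟨rfl, rfl⟩)
      · rintro ⟨κ, hκ⟩
        exact congrArg (chi0 x₁₀ x₀ f hf) hκ
    · exact ⟨fun _ => ⟨k, rfl⟩, fun _ => rfl⟩
end

section
/- With X = (f : X₁ → X₀) an object of the arrow category of pointed sets and χ : [X] → X the morphism defined by [X] = (h : X₁ → X₀ ∨ f⁻¹(⋆)) as above, χ is an initial normal cover: for every normal epimorphism φ : A → X in the arrow category of pointed sets, there exists a unique morphism ψ : [X] → A with φ∘ψ = χ. -/
/-- `χ : [X] → X` is an initial normal cover in the arrow category of pointed sets: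
every normal epimorphism `φ : A → X` (both components normal epis, commuting square)
admits a unique morphism `ψ : [X] → A` of the arrow category with `φ ∘ ψ = χ`. -/
theorem stmt_7 {X₁ X₀ A₁ A₀ : Type} (x₁₀ : X₁) (x₀ : X₀) (f : X₁ → X₀)
    (hf : f x₁₀ = x₀)
    (a₁₀ : A₁) (a₀₀ : A₀) (g : A₁ → A₀) (hg : g a₁₀ = a₀₀)
    (φ₁ : A₁ → X₁) (φ₀ : A₀ → X₀)
    (hsq : ∀ a, f (φ₁ a) = φ₀ (g a))
    (h1 : NormalEpi a₁₀ x₁₀ φ₁) (h0 : NormalEpi a₀₀ x₀ φ₀) :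
    ∃! ψ : (X₁ → A₁) × (Lw x₁₀ x₀ f hf → A₀),
      ψ.1 x₁₀ = a₁₀ ∧ ψ.2 (Quot.mk _ (Sum.inl x₀)) = a₀₀ ∧
      (∀ x : X₁, g (ψ.1 x) = ψ.2 (hmap x₁₀ x₀ f hf x)) ∧
      (∀ x : X₁, φ₁ (ψ.1 x) = x) ∧
      (∀ l : Lw x₁₀ x₀ f hf, φ₀ (ψ.2 l) = chi0 x₁₀ x₀ f hf l) := by
  classical
  obtain ⟨hφ₁0, hφ₁s, hφ₁n⟩ := h1
  obtain ⟨hφ₀0, hφ₀s, hφ₀n⟩ := h0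
  set s₁ : X₁ → A₁ := fun x => if x = x₁₀ then a₁₀ else Classical.choose (hφ₁s x) with hs₁
  set s₀ : X₀ → A₀ := fun x => if x = x₀ then a₀₀ else Classical.choose (hφ₀s x) with hs₀
  have hs₁sec : ∀ x, φ₁ (s₁ x) = x := by
    intro x
    by_cases h : x = x₁₀
    · subst h; simpa [hs₁] using hφ₁0
    · simp only [hs₁, if_neg h]; exact Classical.choose_spec (hφ₁s x)
  have hs₀sec : ∀ x, φ₀ (s₀ x) = x := by
    intro x
    by_cases h : x = x₀
    · subst h; simpa [hs₀] using hφ₀0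
    · simp only [hs₀, if_neg h]; exact Classical.choose_spec (hφ₀s x)
  have hs₁pt : s₁ x₁₀ = a₁₀ := by simp [hs₁]
  have hs₀pt : s₀ x₀ = a₀₀ := by simp [hs₀]
  set ψ₂ : Lw x₁₀ x₀ f hf → A₀ :=
    Quot.lift (Sum.elim s₀ (fun k => g (s₁ k.1)))
      (by
        rintro p q (⟨rfl, rfl⟩ | ⟨rfl, rfl⟩) <;>
          simp [hs₀pt, hs₁pt, hg]) with hψ₂
  have hsquare : ∀ x : X₁, g (s₁ x) = ψ₂ (hmap x₁₀ x₀ f hf x) := by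
    intro x
    by_cases hx : f x = x₀
    · simp [hmap, hx, hψ₂]
    · simp only [hmap, dif_neg hx, hψ₂]
      have h1 : φ₀ (g (s₁ x)) = f x := by rw [← hsq, hs₁sec]
      have h2 : φ₀ (s₀ (f x)) = f x := hs₀sec _
      rcases hφ₀n (g (s₁ x)) (s₀ (f x)) (h1.trans h2.symm) with h | h
      · exact absurd (h1 ▸ h) hx
      · simpa [hx] using h
  refine ⟨⟨s₁, ψ₂⟩, ⟨hs₁pt, by simpa [hψ₂] using hs₀pt, hsquare, hs₁sec, ?_⟩, ?_⟩
  · intro l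
    induction l using Quot.ind with
    | _ p =>
      cases p with
      | inl x => simpa [hψ₂, chi0] using hs₀sec x
      | inr k =>
        have : φ₀ (g (s₁ k.1)) = x₀ := by rw [← hsq, hs₁sec]; exact k.2
        simpa [hψ₂, chi0] using this
  · rintro ⟨t₁, t₂⟩ ⟨hpt1, hpt2, hsq', hsec1, hsec2⟩
    dsimp only at hpt1 hpt2 hsq' hsec1 hsec2
    have ht₁ : t₁ = s₁ := by
      funext x
      rcases hφ₁n (t₁ x) (s₁ x) ((hsec1 x).trans (hs₁sec x).symm) with h | h
      · have hx : x = x₁₀ := by rw [← hsec1 x, h]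
        subst hx; rw [hpt1, hs₁pt]
      · exact h
    refine Prod.ext ht₁ ?_
    show t₂ = ψ₂
    funext l
    induction l using Quot.ind with
    | _ p =>
      cases p with
      | inl x =>
        by_cases h : x = x₀
        · subst h; simpa [hψ₂, hs₀pt] using hpt2
        · rcases hφ₀n (t₂ (Quot.mk _ (Sum.inl x))) (ψ₂ (Quot.mk _ (Sum.inl x)))
            (by refine (hsec2 _).trans ?_; simp [hψ₂, chi0, hs₀sec]) with h' | h'
          · have : x = x₀ := by
              have := hsec2 (Quot.mk _ (Sum.inl x))
              rw [h'] at this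
              simpa [chi0] using this.symm
            exact absurd this h
          · exact h'
      | inr k =>
        have hq : (Quot.mk _ (Sum.inr k) : Lw x₁₀ x₀ f hf) = hmap x₁₀ x₀ f hf k.1 := by
          simp [hmap, k.2]
        rw [hq, ← hsq' k.1, ← hsquare k.1, ht₁]
end

section
/- Let X = (f : X₁ → X₀) be an object of the arrow category of pointed sets such that there exists a ∈ X₁ with a ≠ ⋆ and f(a) = ⋆. Then the short exact sequence K → [X] → X (with K = ({⋆} → f⁻¹(⋆)) the kernel of the initial normal cover χ : [X] → X) does not split: there is no morphism r : [X] → K in the arrow category with r restricting to the identity on K. -/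
/-- If there is `a ≠ ⋆` in `X₁` with `f a = ⋆`, the short exact sequence
`K → [X] → X` does not split: there is no morphism `r : [X] → K` of the arrow
category restricting to the identity on `K = ({⋆} → f⁻¹(⋆))`. -/
theorem stmt_8 {X₁ X₀ : Type} (x₁₀ : X₁) (x₀ : X₀) (f : X₁ → X₀) (hf : f x₁₀ = x₀)
    (a : X₁) (ha : a ≠ x₁₀) (hfa : f a = x₀) :
    ¬ ∃ r : (X₁ → Unit) × (Lw x₁₀ x₀ f hf → Ker x₀ f),
        (∀ x : X₁, r.2 (hmap x₁₀ x₀ f hf x) = (⟨x₁₀, hf⟩ : Ker x₀ f)) ∧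
        (∀ κ : Ker x₀ f, r.2 (Quot.mk _ (Sum.inr κ)) = κ) := by
  rintro ⟨r, h1, h2⟩
  have h := h1 a
  unfold hmap at h
  have e : hmap x₁₀ x₀ f hf a = Quot.mk _ (Sum.inr (⟨a, hfa⟩ : Ker x₀ f)) := dif_pos hfa
  replace h : r.2 (hmap x₁₀ x₀ f hf a) = _ := h1 a
  rw [e] at h
  replace h := (h2 ⟨a, hfa⟩).symm.trans h
  exact ha (congrArg Subtype.val h)
end

section
/- The order dual of the partially ordered set obtained from ℕ × ℕ (with the componentwise order) by adjoining a top element is a frame: it is a complete lattice in which a ⊓ (⨆_i b_i) = ⨆_i (a ⊓ b_i) for every element a and every family (b_i). -/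
open Classical in
/-- Infimum on `WithTop (ℕ × ℕ)`. -/
noncomputable def wInf (S : Set (WithTop (ℕ × ℕ))) : WithTop (ℕ × ℕ) :=
  if _ : ∃ p : ℕ × ℕ, (p : WithTop (ℕ × ℕ)) ∈ S then
    ((sInf (Prod.fst '' {p : ℕ × ℕ | (p : WithTop (ℕ × ℕ)) ∈ S}),
      sInf (Prod.snd '' {p : ℕ × ℕ | (p : WithTop (ℕ × ℕ)) ∈ S})) : ℕ × ℕ)
  else ⊤

lemma wInf_isGLB (S : Set (WithTop (ℕ × ℕ))) : IsGLB S (wInf S) := by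
  unfold wInf
  split_ifs with h
  · constructor
    · rintro (_ | q) hq
      · exact le_top
      · refine WithTop.coe_le_coe.2 ⟨Nat.sInf_le ⟨q, hq, rfl⟩, Nat.sInf_le ⟨q, hq, rfl⟩⟩
    · rintro (_ | q) hb
      · obtain ⟨p, hp⟩ := h
        exact absurd (hb hp) (WithTop.not_top_le_coe p)
      · obtain ⟨p, hp⟩ := h
        refine WithTop.coe_le_coe.2 ⟨?_, ?_⟩
        · refine le_csInf ⟨p.1, p, hp, rfl⟩ ?_
          rintro _ ⟨r, hr, rfl⟩
          exact (WithTop.coe_le_coe.1 (hb hr)).1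
        · refine le_csInf ⟨p.2, p, hp, rfl⟩ ?_
          rintro _ ⟨r, hr, rfl⟩
          exact (WithTop.coe_le_coe.1 (hb hr)).2
  · constructor
    · rintro (_ | q) hq
      · exact le_refl _
      · exact absurd ⟨q, hq⟩ h
    · intro b _
      exact le_top

noncomputable def instWT : CompleteLattice (WithTop (ℕ × ℕ)) :=
  { (inferInstance : Lattice (WithTop (ℕ × ℕ))),
    (inferInstance : BoundedOrder (WithTop (ℕ × ℕ))) with
    sInf := wInf
    sSup := fun S => wInf (upperBounds S)
    isLUB_sSup := fun S => ⟨fun _ ha => (wInf_isGLB (upperBounds S)).2 fun _ hb => hb ha,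
      fun _ hb => (wInf_isGLB (upperBounds S)).1 hb⟩
    isGLB_sInf := fun S => wInf_isGLB S }

lemma nat_max_sInf (k : ℕ) (U : Set ℕ) (hU : U.Nonempty) :
    sInf ((fun n => max k n) '' U) = max k (sInf U) := by
  apply le_antisymm
  · exact Nat.sInf_le ⟨sInf U, Nat.sInf_mem hU, rfl⟩
  · refine le_csInf ⟨max k hU.choose, hU.choose, hU.choose_spec, rfl⟩ ?_
    rintro _ ⟨n, hn, rfl⟩
    exact max_le_max le_rfl (Nat.sInf_le hn)

lemma key (x : WithTop (ℕ × ℕ)) (I : Type) (y : I → WithTop (ℕ × ℕ)) :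
    x ⊔ wInf (Set.range y) = wInf (Set.range fun i => x ⊔ y i) := by
  cases x with
  | top =>
    rw [top_sup_eq]
    rw [wInf, dif_neg]
    rintro ⟨p, i, hi⟩
    simp only [top_sup_eq] at hi
    exact (WithTop.coe_ne_top hi.symm).elim
  | coe a =>
    by_cases h : ∃ p : ℕ × ℕ, (p : WithTop (ℕ × ℕ)) ∈ Set.range y
    · have hT : {p : ℕ × ℕ | (p : WithTop (ℕ × ℕ)) ∈ Set.range fun i => ↑a ⊔ y i}
          = (fun q => a ⊔ q) '' {q : ℕ × ℕ | (q : WithTop (ℕ × ℕ)) ∈ Set.range y} := by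
        ext p
        constructor
        · rintro ⟨i, hi⟩
          simp only at hi
          cases hy : y i with
          | top => rw [hy, sup_top_eq] at hi; simp at hi
          | coe q =>
            rw [hy, ← WithTop.coe_sup] at hi
            exact ⟨q, ⟨i, hy⟩, WithTop.coe_inj.1 hi⟩
        · rintro ⟨q, ⟨i, hi⟩, rfl⟩
          exact ⟨i, by simp only; rw [hi, ← WithTop.coe_sup]⟩
      obtain ⟨p₀, hp₀⟩ := h
      have h' : ∃ p : ℕ × ℕ, (p : WithTop (ℕ × ℕ)) ∈ Set.range fun i => ↑a ⊔ y i := by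
        obtain ⟨i, hi⟩ := hp₀
        exact ⟨a ⊔ p₀, i, by simp only; rw [hi, ← WithTop.coe_sup]⟩
      rw [wInf, dif_pos ⟨p₀, hp₀⟩, wInf, dif_pos h', ← WithTop.coe_sup, WithTop.coe_inj, hT,
        Set.image_image, Set.image_image]
      have e1 : (fun q : ℕ × ℕ => (a ⊔ q).1) '' {q : ℕ × ℕ | (q : WithTop (ℕ × ℕ)) ∈ Set.range y}
          = (fun n => max a.1 n) '' (Prod.fst '' {q : ℕ × ℕ | (q : WithTop (ℕ × ℕ)) ∈ Set.range y}) := by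
        rw [Set.image_image]; rfl
      have e2 : (fun q : ℕ × ℕ => (a ⊔ q).2) '' {q : ℕ × ℕ | (q : WithTop (ℕ × ℕ)) ∈ Set.range y}
          = (fun n => max a.2 n) '' (Prod.snd '' {q : ℕ × ℕ | (q : WithTop (ℕ × ℕ)) ∈ Set.range y}) := by
        rw [Set.image_image]; rfl
      rw [e1, e2,
        nat_max_sInf a.1 (Prod.fst '' {q : ℕ × ℕ | (q : WithTop (ℕ × ℕ)) ∈ Set.range y})
          ⟨p₀.1, p₀, hp₀, rfl⟩,
        nat_max_sInf a.2 (Prod.snd '' {q : ℕ × ℕ | (q : WithTop (ℕ × ℕ)) ∈ Set.range y})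
          ⟨p₀.2, p₀, hp₀, rfl⟩]
      rfl
    · rw [wInf, dif_neg h, sup_top_eq, wInf, dif_neg]
      rintro ⟨p, i, hi⟩
      simp only at hi
      cases hy : y i with
      | top => rw [hy, sup_top_eq] at hi; simp at hi
      | coe q => exact h ⟨q, i, hy⟩

/-- The order dual of `ℕ × ℕ` (componentwise order) with a top element adjoined is a
frame: it carries a complete lattice structure, compatible with its order, in which
binary meets distribute over arbitrary joins. -/
theorem stmt_10 :
    ∃ inst : CompleteLattice ((WithTop (ℕ × ℕ))ᵒᵈ),
      (∀ a b : (WithTop (ℕ × ℕ))ᵒᵈ, inst.le a b ↔ a ≤ b) ∧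
      ∀ (a : (WithTop (ℕ × ℕ))ᵒᵈ) (I : Type) (b : I → (WithTop (ℕ × ℕ))ᵒᵈ),
        inst.inf a (inst.sSup (Set.range b)) =
          inst.sSup (Set.range fun i => inst.inf a (b i)) := by
  refine ⟨@OrderDual.instCompleteLattice _ instWT, fun a b => Iff.rfl, fun a I b => ?_⟩
  exact key (OrderDual.ofDual a) I (fun i => OrderDual.ofDual (b i))
end
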